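/- For every integer N ≥ 1, the identity P_{3N+2} · (1 − y q^{3N+2}) = P_{3N+1} − P_{3N−1} · y q^{3N+2} holds in the formal power series ring ℤ[[x, y, q]]. -/

import Mathlib

/-- The `i`-th largest part (0-indexed) of the weakly decreasing list of parts of a
partition of `n` (entries beyond the number of parts are `0`, which realizes the
padding by zeros). -/
def nthPart {n : ℕ} (P : n.Partition) (i : ℕ) : ℕ :=
  ((P.parts.sort (· ≤ ·)).reverse).getD i 0

/-- The `j`-th component (`1 ≤ j ≤ m - 1`) of the alternating sum type modulo `m` of a
partition of `n`: `Σ_j = ∑_i (λ_{(i-1)m+j} - λ_{(i-1)m+j+1})` (1-indexed parts, padded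
by zeros; summing over `i < n + 1` covers every nonzero term). -/
def altSumType (m : ℕ) {n : ℕ} (P : n.Partition) (j : ℕ) : ℕ :=
  ∑ i ∈ Finset.range (n + 1), (nthPart P (i * m + (j - 1)) - nthPart P (i * m + j))

/-- `aN N s1 s2 n` : the number of partitions of `n` with exactly `N` (positive) parts,
every part occurring at most twice, and alternating sum type modulo `3` equal to
`(s1, s2)`. -/
noncomputable def aN (N s1 s2 n : ℕ) : ℕ :=
  Nat.card {P : n.Partition // P.parts.card = N ∧ (∀ p, P.parts.count p ≤ 2) ∧
    altSumType 3 P 1 = s1 ∧ altSumType 3 P 2 = s2}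

/-- The formal power series `A_N ∈ ℤ[[x, y, q]]` (variables `x = X 0`, `y = X 1`,
`q = X 2`): `A_0 = 1` and, for `N ≥ 1`,
`A_N = ∑_{Σ₁, Σ₂ ≥ 0, n ≥ 1} a_N(Σ₁, Σ₂; n) x^{Σ₁} y^{Σ₂} q^n`. -/
noncomputable def Aser (N : ℕ) : MvPowerSeries (Fin 3) ℤ :=
  if N = 0 then 1
  else fun e => if 1 ≤ e 2 then (aN N (e 0) (e 1) (e 2) : ℤ) else 0

/-- The variable `x`. -/
noncomputable def Xv : MvPowerSeries (Fin 3) ℤ := MvPowerSeries.X 0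

/-- The variable `y`. -/
noncomputable def Yv : MvPowerSeries (Fin 3) ℤ := MvPowerSeries.X 1

/-- The variable `q`. -/
noncomputable def Qv : MvPowerSeries (Fin 3) ℤ := MvPowerSeries.X 2

/-- The formal power series `P_N = ∑_{i=0}^{N} A_i ∈ ℤ[[x, y, q]]`. -/
noncomputable def Pser (N : ℕ) : MvPowerSeries (Fin 3) ℤ :=
  ∑ i ∈ Finset.range (N + 1), Aser i

namespace StmtHelper

/-! ### Generic list lemmas -/

theorem getD_map_pred (l : List ℕ) (i : ℕ) : (l.map (· - 1)).getD i 0 = l.getD i 0 - 1 := by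
  rcases lt_or_ge i l.length with h | h
  · rw [List.getD_eq_getElem _ _ (by simpa), List.getD_eq_getElem _ _ h]
    simp
  · rw [List.getD_eq_default _ _ (by simpa), List.getD_eq_default _ _ h]

theorem getD_filter_sorted (l : List ℕ) (h : l.Pairwise (· ≥ ·)) (i : ℕ) :
    (l.filter (· ≠ 0)).getD i 0 = l.getD i 0 := by
  induction l generalizing i with
  | nil => rfl
  | cons a t ih =>
    rcases eq_or_ne a 0 with rfl | ha
    · have ht : ∀ x ∈ t, x = 0 := fun x hx => Nat.le_zero.mp (List.rel_of_pairwise_cons h hx)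
      have hnil : (0 :: t).filter (· ≠ 0) = [] := by
        rw [List.filter_eq_nil_iff]
        intro x hx
        rcases List.mem_cons.mp hx with rfl | hx
        · simp
        · simp [ht x hx]
      rw [hnil]
      cases i with
      | zero => simp
      | succ j =>
        simp only [List.getD_nil, List.getD_cons_succ]
        rcases lt_or_ge j t.length with hj | hj
        · rw [List.getD_eq_getElem _ _ hj]
          exact (ht _ (List.getElem_mem _)).symm
        · rw [List.getD_eq_default _ _ hj]
    · rw [List.filter_cons_of_pos (by simpa)]
      cases i with
      | zero => simp
      | succ j => simpa using ih h.of_cons j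

/-! ### Generic multiset lemmas -/

theorem mycard_le_sum (s : Multiset ℕ) (h : ∀ x ∈ s, 0 < x) : Multiset.card s ≤ s.sum := by
  induction s using Multiset.induction with
  | empty => simp
  | cons a t ih =>
    simp only [Multiset.sum_cons, Multiset.card_cons]
    have := h a (Multiset.mem_cons_self a t)
    have := ih fun x hx => h x (Multiset.mem_cons_of_mem hx)
    omega

theorem sum_map_pred (s : Multiset ℕ) (h : ∀ x ∈ s, 0 < x) :
    (s.map (· - 1)).sum = s.sum - Multiset.card s := by
  induction s using Multiset.induction with
  | empty => simp
  | cons a t ih =>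
    have ha : 0 < a := h a (Multiset.mem_cons_self a t)
    have ht : Multiset.card t ≤ t.sum := mycard_le_sum t fun x hx => h x (Multiset.mem_cons_of_mem hx)
    simp only [Multiset.map_cons, Multiset.sum_cons, Multiset.card_cons]
    rw [ih fun x hx => h x (Multiset.mem_cons_of_mem hx)]
    omega

theorem sum_filter_ne_zero (s : Multiset ℕ) : (s.filter (· ≠ 0)).sum = s.sum := by
  conv_rhs => rw [← Multiset.filter_add_not (· ≠ 0) s]
  have h0 : (Multiset.filter (fun a => ¬a ≠ 0) s).sum = 0 := by
    rw [Multiset.sum_eq_zero]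
    intro x hx
    have := Multiset.of_mem_filter hx
    simpa using this
  rw [Multiset.sum_add, h0, add_zero]

theorem sum_map_succ (s : Multiset ℕ) :
    (s.map (· + 1)).sum = s.sum + Multiset.card s := by
  induction s using Multiset.induction with
  | empty => simp
  | cons a t ih =>
    simp only [Multiset.map_cons, Multiset.sum_cons, Multiset.card_cons]
    rw [ih]
    omega

/-! ### descList -/

def descList {n : ℕ} (P : n.Partition) : List ℕ := (P.parts.sort (· ≤ ·)).reverse

theorem nthPart_eq {n : ℕ} (P : n.Partition) (i : ℕ) : nthPart P i = (descList P).getD i 0 := rfl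

theorem descList_sorted {n : ℕ} (P : n.Partition) : (descList P).Pairwise (· ≥ ·) := by
  rw [descList, List.pairwise_reverse]
  exact Multiset.pairwise_sort (r := (· ≤ ·)) (s := P.parts)

theorem descList_coe {n : ℕ} (P : n.Partition) : (descList P : Multiset ℕ) = P.parts := by
  rw [descList, ← Multiset.coe_reverse, List.reverse_reverse, Multiset.sort_eq]

theorem descList_length {n : ℕ} (P : n.Partition) :
    (descList P).length = Multiset.card P.parts := by
  rw [← Multiset.coe_card, descList_coe]

theorem descList_pos {n : ℕ} (P : n.Partition) : ∀ x ∈ descList P, 0 < x := by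
  intro x hx
  exact P.parts_pos (by rw [← descList_coe]; exact_mod_cast hx)

theorem descList_unique {n : ℕ} (P : n.Partition) (l : List ℕ) (hs : l.Pairwise (· ≥ ·))
    (hc : (l : Multiset ℕ) = P.parts) : descList P = l := by
  have : IsAntisymm ℕ (· ≥ ·) := ⟨fun a b h1 h2 => le_antisymm h2 h1⟩
  refine List.Perm.eq_of_pairwise (fun a b _ _ h1 h2 => le_antisymm h2 h1) (descList_sorted P) hs ?_
  rw [← Multiset.coe_eq_coe, descList_coe, hc]

theorem nthPart_pos {n : ℕ} (P : n.Partition) (i : ℕ) (h : i < Multiset.card P.parts) :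
    0 < nthPart P i := by
  rw [nthPart_eq, List.getD_eq_getElem _ _ (by rwa [descList_length])]
  exact descList_pos P _ (List.getElem_mem _)

theorem nthPart_eq_zero {n : ℕ} (P : n.Partition) (i : ℕ) (h : Multiset.card P.parts ≤ i) :
    nthPart P i = 0 := by
  rw [nthPart_eq, List.getD_eq_default _ _ (by rwa [descList_length])]

theorem card_le {n : ℕ} (P : n.Partition) : Multiset.card P.parts ≤ n := by
  calc Multiset.card P.parts ≤ P.parts.sum := mycard_le_sum _ fun x hx => P.parts_pos hx
    _ = n := P.parts_sum

/-! ### pdown and pup -/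

/-- Remove 1 from each part. -/
def pdown {n k : ℕ} (P : (n + k).Partition) (h : Multiset.card P.parts = k) : n.Partition where
  parts := (P.parts.map (· - 1)).filter (· ≠ 0)
  parts_pos := fun {i} hi => Nat.pos_of_ne_zero (Multiset.mem_filter.mp hi).2
  parts_sum := by
    rw [sum_filter_ne_zero, sum_map_pred _ fun x hx => P.parts_pos hx, P.parts_sum, h]
    omega

/-- Add 1 to each part, after padding with zeros to `k` parts. -/
def pup {n k : ℕ} (Q : n.Partition) (h : Multiset.card Q.parts ≤ k) : (n + k).Partition where
  parts := Q.parts.map (· + 1) + Multiset.replicate (k - Multiset.card Q.parts) 1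
  parts_pos := by
    intro i hi
    rcases Multiset.mem_add.mp hi with hi | hi
    · obtain ⟨a, -, rfl⟩ := Multiset.mem_map.mp hi
      omega
    · rw [Multiset.eq_of_mem_replicate hi]
      omega
  parts_sum := by
    rw [Multiset.sum_add, Multiset.sum_replicate, smul_eq_mul, mul_one, sum_map_succ,
      Q.parts_sum]
    omega

theorem pdown_parts {n k : ℕ} (P : (n + k).Partition) (h : Multiset.card P.parts = k) :
    (pdown P h).parts = (P.parts.map (· - 1)).filter (· ≠ 0) := rfl

theorem pup_parts {n k : ℕ} (Q : n.Partition) (h : Multiset.card Q.parts ≤ k) :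
    (pup Q h).parts = Q.parts.map (· + 1) + Multiset.replicate (k - Multiset.card Q.parts) 1 :=
  rfl

theorem card_pup {n k : ℕ} (Q : n.Partition) (h : Multiset.card Q.parts ≤ k) :
    Multiset.card (pup Q h).parts = k := by
  simp only [pup, Multiset.card_add, Multiset.card_map, Multiset.card_replicate]
  omega

theorem count_one_le_card {n : ℕ} (P : n.Partition) :
    P.parts.count 1 ≤ Multiset.card P.parts := Multiset.count_le_card _ _

theorem card_pdown {n k : ℕ} (P : (n + k).Partition) (h : Multiset.card P.parts = k) :
    Multiset.card (pdown P h).parts = Multiset.card P.parts - P.parts.count 1 := by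
  rw [pdown_parts]
  have hsplit := Multiset.filter_add_not (· ≠ 0) (P.parts.map (· - 1))
  have hcard : Multiset.card ((P.parts.map (· - 1)).filter (· ≠ 0)) +
      Multiset.card ((P.parts.map (· - 1)).filter (fun a => ¬a ≠ 0)) =
      Multiset.card P.parts := by
    rw [← Multiset.card_add, hsplit, Multiset.card_map]
  have hz : ((P.parts.map (· - 1)).filter (fun a => ¬a ≠ 0)) =
      ((P.parts.map (· - 1)).filter (· = 0)) := by
    apply Multiset.filter_congr
    intro x _
    simp
  have hz2 : Multiset.card ((P.parts.map (· - 1)).filter (· = 0)) =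
      Multiset.count 0 (P.parts.map (· - 1)) := by
    rw [Multiset.filter_eq', Multiset.card_replicate]
  have hz3 : Multiset.count 0 (P.parts.map (· - 1)) = P.parts.count 1 := by
    rw [Multiset.count_map]
    have heq : P.parts.filter (fun a => (0 : ℕ) = a - 1) = P.parts.filter (· = 1) := by
      apply Multiset.filter_congr
      intro x hx
      have := P.parts_pos hx
      omega
    rw [heq, Multiset.filter_eq', Multiset.card_replicate]
  have hcc : Multiset.card ((P.parts.map (· - 1)).filter (fun a => ¬a ≠ 0)) =
      P.parts.count 1 := by
    rw [hz, hz2, hz3]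
  omega

theorem descList_pdown {n k : ℕ} (P : (n + k).Partition) (h : Multiset.card P.parts = k) :
    descList (pdown P h) = ((descList P).map (· - 1)).filter (· ≠ 0) := by
  have hs1 : ((descList P).map (· - 1)).Pairwise (· ≥ ·) :=
    List.Pairwise.map _ (fun a b hab => Nat.sub_le_sub_right hab 1) (descList_sorted P)
  refine descList_unique _ _ (List.Pairwise.filter _ hs1) ?_
  rw [pdown_parts, ← descList_coe P]
  rfl

theorem nthPart_pdown {n k : ℕ} (P : (n + k).Partition) (h : Multiset.card P.parts = k) (i : ℕ) :
    nthPart (pdown P h) i = nthPart P i - 1 := by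
  have hs1 : ((descList P).map (· - 1)).Pairwise (· ≥ ·) :=
    List.Pairwise.map _ (fun a b hab => Nat.sub_le_sub_right hab 1) (descList_sorted P)
  rw [nthPart_eq, nthPart_eq, descList_pdown, getD_filter_sorted _ hs1, getD_map_pred]

theorem pup_pdown {n k : ℕ} (P : (n + k).Partition) (h : Multiset.card P.parts = k)
    (h2 : Multiset.card (pdown P h).parts ≤ k) : pup (pdown P h) h2 = P := by
  apply Nat.Partition.ext
  rw [pup_parts, pdown_parts]
  have hrep : k - Multiset.card ((P.parts.map (· - 1)).filter (· ≠ 0)) = P.parts.count 1 := by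
    have hcd := card_pdown P h
    rw [pdown_parts] at hcd
    rw [hcd, h]
    have := count_one_le_card P
    omega
  have hmapped : ((P.parts.map (· - 1)).filter (· ≠ 0)).map (· + 1) =
      P.parts.filter (· ≠ 1) := by
    rw [Multiset.filter_map, Multiset.map_map]
    have h1 : P.parts.filter ((· ≠ 0) ∘ (· - 1)) = P.parts.filter (· ≠ 1) := by
      apply Multiset.filter_congr
      intro x hx
      have := P.parts_pos hx
      simp only [Function.comp_apply]
      omega
    rw [h1]
    have h2' : (P.parts.filter (· ≠ 1)).map ((· + 1) ∘ (· - 1)) =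
        (P.parts.filter (· ≠ 1)).map id := by
      apply Multiset.map_congr rfl
      intro x hx
      have hx1 : x ≠ 1 := (Multiset.mem_filter.mp hx).2
      have := P.parts_pos (Multiset.mem_of_mem_filter hx)
      simp only [Function.comp_apply, id]
      omega
    rw [h2', Multiset.map_id]
  rw [hrep, hmapped]
  have : Multiset.replicate (P.parts.count 1) 1 = P.parts.filter (· = 1) :=
    (Multiset.filter_eq' _ _).symm
  rw [this]
  have hfc : P.parts.filter (· = 1) = P.parts.filter (fun a => ¬a ≠ 1) := by
    apply Multiset.filter_congr
    intro x _
    simp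
  rw [hfc, Multiset.filter_add_not]

theorem pdown_pup {n k : ℕ} (Q : n.Partition) (h : Multiset.card Q.parts ≤ k)
    (h2 : Multiset.card (pup Q h).parts = k) : pdown (pup Q h) h2 = Q := by
  apply Nat.Partition.ext
  rw [pdown_parts, pup_parts, Multiset.map_add, Multiset.map_map, Multiset.map_replicate,
    Multiset.filter_add]
  have h1 : Q.parts.map ((· - 1) ∘ (· + 1)) = Q.parts := by
    have h1' : Q.parts.map ((· - 1) ∘ (· + 1)) = Q.parts.map id := by
      apply Multiset.map_congr rfl
      intro x _
      simp
    rw [h1', Multiset.map_id]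
  rw [h1]
  have h2' : Q.parts.filter (· ≠ 0) = Q.parts := by
    rw [Multiset.filter_eq_self]
    intro a ha
    exact (Q.parts_pos ha).ne'
  have h3 : (Multiset.replicate (k - Multiset.card Q.parts) ((1 : ℕ) - 1)).filter (· ≠ 0) = 0 := by
    rw [Multiset.filter_eq_nil]
    intro a ha
    simp [Multiset.eq_of_mem_replicate ha]
  rw [h2', h3, add_zero]

/-! ### multiplicity bounds -/

theorem count_pdown {n k : ℕ} (P : (n + k).Partition) (h : Multiset.card P.parts = k)
    (hm : ∀ p, P.parts.count p ≤ 2) (p : ℕ) : (pdown P h).parts.count p ≤ 2 := by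
  rw [pdown_parts]
  match p with
  | 0 =>
    rw [Multiset.count_filter_of_neg (by simp)]
    omega
  | q + 1 =>
    rw [Multiset.count_filter_of_pos (by simp), Multiset.count_map]
    have heq : P.parts.filter (fun a => q + 1 = a - 1) = P.parts.filter (· = q + 2) := by
      apply Multiset.filter_congr
      intro x hx
      have := P.parts_pos hx
      omega
    rw [heq, Multiset.filter_eq', Multiset.card_replicate]
    exact hm (q + 2)

theorem count_pup {n k : ℕ} (Q : n.Partition) (h : Multiset.card Q.parts ≤ k)
    (hm : ∀ p, Q.parts.count p ≤ 2) (hr : k - Multiset.card Q.parts ≤ 2) (p : ℕ) :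
    (pup Q h).parts.count p ≤ 2 := by
  rw [pup_parts, Multiset.count_add]
  have hinj : Function.Injective (· + 1 : ℕ → ℕ) := fun a b hab => by
    simp only [] at hab
    omega
  match p with
  | 0 =>
    have h1 : Multiset.count 0 (Q.parts.map (· + 1)) = 0 := by
      apply Multiset.count_eq_zero_of_notMem
      intro hmem
      obtain ⟨a, -, ha⟩ := Multiset.mem_map.mp hmem
      omega
    rw [h1, Multiset.count_replicate]
    simp
  | 1 =>
    have h1 : Multiset.count 1 (Q.parts.map (· + 1)) = Multiset.count 0 Q.parts := by
      have := Multiset.count_map_eq_count' (· + 1 : ℕ → ℕ) Q.parts hinj 0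
      simpa using this
    have h0 : Multiset.count 0 Q.parts = 0 :=
      Multiset.count_eq_zero_of_notMem fun hmem => (Q.parts_pos hmem).ne rfl
    rw [h1, h0, Multiset.count_replicate_self]
    omega
  | q + 2 =>
    have h1 : Multiset.count (q + 2) (Q.parts.map (· + 1)) = Multiset.count (q + 1) Q.parts := by
      have := Multiset.count_map_eq_count' (· + 1 : ℕ → ℕ) Q.parts hinj (q + 1)
      simpa using this
    rw [h1, Multiset.count_replicate, if_neg (by omega)]
    have := hm (q + 1)
    omega

/-! ### alternating sums -/

theorem altSum_eq {n : ℕ} (P : n.Partition) (j K : ℕ) (hj : 1 ≤ j)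
    (hK : Multiset.card P.parts ≤ 3 * K) (hKn : K ≤ n + 1) :
    altSumType 3 P j = ∑ i ∈ Finset.range K, (nthPart P (i * 3 + (j - 1)) - nthPart P (i * 3 + j)) := by
  rw [altSumType]
  refine (Finset.sum_subset (Finset.range_subset_range.mpr hKn) fun i _ hi => ?_).symm
  have hiK : K ≤ i := by simpa using hi
  have hz1 : nthPart P (i * 3 + (j - 1)) = 0 := nthPart_eq_zero _ _ (by omega)
  have hz2 : nthPart P (i * 3 + j) = 0 := nthPart_eq_zero _ _ (by omega)
  omega

theorem alt1_pdown {n N : ℕ} (P : (n + (3 * N + 2)).Partition)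
    (h : Multiset.card P.parts = 3 * N + 2) (hn : N ≤ n) :
    altSumType 3 (pdown P h) 1 = altSumType 3 P 1 := by
  have hcP : Multiset.card P.parts ≤ 3 * (N + 1) := by omega
  have hcQ : Multiset.card (pdown P h).parts ≤ 3 * (N + 1) := by
    rw [pdown_parts]
    calc Multiset.card ((P.parts.map (· - 1)).filter (· ≠ 0))
        ≤ Multiset.card (P.parts.map (· - 1)) := Multiset.card_le_card (Multiset.filter_le _ _)
      _ = Multiset.card P.parts := Multiset.card_map _ _
      _ ≤ 3 * (N + 1) := hcP
  rw [altSum_eq P 1 (N + 1) le_rfl hcP (by omega),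
    altSum_eq (pdown P h) 1 (N + 1) le_rfl hcQ (by omega)]
  apply Finset.sum_congr rfl
  intro i hi
  have hiN : i ≤ N := by simpa [Nat.lt_succ_iff] using hi
  have hpos : 1 ≤ nthPart P (i * 3 + 1) := nthPart_pos _ _ (by omega)
  rw [nthPart_pdown, nthPart_pdown]
  exact tsub_tsub_tsub_cancel_right hpos

theorem alt2_pdown {n N : ℕ} (P : (n + (3 * N + 2)).Partition)
    (h : Multiset.card P.parts = 3 * N + 2) (hn : N ≤ n) :
    altSumType 3 (pdown P h) 2 + 1 = altSumType 3 P 2 := by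
  have hcP : Multiset.card P.parts ≤ 3 * (N + 1) := by omega
  have hcQ : Multiset.card (pdown P h).parts ≤ 3 * (N + 1) := by
    rw [pdown_parts]
    calc Multiset.card ((P.parts.map (· - 1)).filter (· ≠ 0))
        ≤ Multiset.card (P.parts.map (· - 1)) := Multiset.card_le_card (Multiset.filter_le _ _)
      _ = Multiset.card P.parts := Multiset.card_map _ _
      _ ≤ 3 * (N + 1) := hcP
  rw [altSum_eq P 2 (N + 1) (by omega) hcP (by omega),
    altSum_eq (pdown P h) 2 (N + 1) (by omega) hcQ (by omega),
    Finset.sum_range_succ, Finset.sum_range_succ]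
  have hsums : ∑ i ∈ Finset.range N, (nthPart (pdown P h) (i * 3 + (2 - 1)) -
      nthPart (pdown P h) (i * 3 + 2)) =
      ∑ i ∈ Finset.range N, (nthPart P (i * 3 + (2 - 1)) - nthPart P (i * 3 + 2)) := by
    apply Finset.sum_congr rfl
    intro i hi
    have hiN : i < N := by simpa using hi
    have hpos : 1 ≤ nthPart P (i * 3 + 2) := nthPart_pos _ _ (by omega)
    rw [nthPart_pdown, nthPart_pdown]
    exact tsub_tsub_tsub_cancel_right hpos
  rw [hsums]
  have ha : 1 ≤ nthPart P (N * 3 + (2 - 1)) := nthPart_pos _ _ (by omega)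
  have hz : nthPart P (N * 3 + 2) = 0 := nthPart_eq_zero _ _ (by omega)
  rw [nthPart_pdown, nthPart_pdown, hz]
  omega

theorem alt2_pos {n N : ℕ} (P : n.Partition) (h : Multiset.card P.parts = 3 * N + 2) :
    1 ≤ altSumType 3 P 2 := by
  have hcn : 3 * N + 2 ≤ n := h ▸ card_le P
  rw [altSum_eq P 2 (N + 1) (by omega) (by omega) (by omega)]
  have hterm : 1 ≤ nthPart P (N * 3 + (2 - 1)) - nthPart P (N * 3 + 2) := by
    have ha : 1 ≤ nthPart P (N * 3 + (2 - 1)) := nthPart_pos _ _ (by omega)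
    have hz : nthPart P (N * 3 + 2) = 0 := nthPart_eq_zero _ _ (by omega)
    omega
  calc (1 : ℕ) ≤ nthPart P (N * 3 + (2 - 1)) - nthPart P (N * 3 + 2) := hterm
    _ ≤ _ := Finset.single_le_sum
      (f := fun i => nthPart P (i * 3 + (2 - 1)) - nthPart P (i * 3 + 2))
      (fun i _ => Nat.zero_le _) (Finset.self_mem_range_succ N)

/-! ### counting lemmas for `aN` -/

theorem aN_eq_zero_of_lt {k s1 s2 n : ℕ} (h : n < k) : aN k s1 s2 n = 0 := by
  rw [aN]
  have : IsEmpty {P : n.Partition // Multiset.card P.parts = k ∧ (∀ p, P.parts.count p ≤ 2) ∧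
      altSumType 3 P 1 = s1 ∧ altSumType 3 P 2 = s2} := by
    refine ⟨fun x => ?_⟩
    have := card_le x.1
    have := x.2.1
    omega
  simp [Nat.card_of_isEmpty]

theorem aN_eq_zero_of_s2_zero {N s1 n : ℕ} : aN (3 * N + 2) s1 0 n = 0 := by
  rw [aN]
  have : IsEmpty {P : n.Partition // Multiset.card P.parts = 3 * N + 2 ∧
      (∀ p, P.parts.count p ≤ 2) ∧ altSumType 3 P 1 = s1 ∧ altSumType 3 P 2 = 0} := by
    refine ⟨fun x => ?_⟩
    have := alt2_pos x.1 x.2.1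
    have := x.2.2.2.2
    omega
  simp [Nat.card_of_isEmpty]

/-! ### the key recurrence -/

theorem key (N s1 s2 n : ℕ) :
    aN (3 * N + 2) s1 (s2 + 1) (n + (3 * N + 2)) =
      aN (3 * N) s1 s2 n + aN (3 * N + 1) s1 s2 n + aN (3 * N + 2) s1 s2 n := by
  classical
  have E : {P : (n + (3 * N + 2)).Partition // Multiset.card P.parts = 3 * N + 2 ∧
        (∀ p, P.parts.count p ≤ 2) ∧ altSumType 3 P 1 = s1 ∧ altSumType 3 P 2 = s2 + 1} ≃
      {Q : n.Partition // (Multiset.card Q.parts = 3 * N ∨ Multiset.card Q.parts = 3 * N + 1 ∨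
        Multiset.card Q.parts = 3 * N + 2) ∧
        (∀ p, Q.parts.count p ≤ 2) ∧ altSumType 3 Q 1 = s1 ∧ altSumType 3 Q 2 = s2} := by
    refine
      { toFun := fun x => ⟨pdown x.1 x.2.1, ?_⟩
        invFun := fun y => ⟨pup y.1 (show Multiset.card y.1.parts ≤ 3 * N + 2 by
            rcases y.2.1 with h | h | h <;> omega), ?_⟩
        left_inv := fun x => ?_
        right_inv := fun y => ?_ }
    · obtain ⟨P, hc, hm, h1, h2⟩ := x
      dsimp only
      have hcd : Multiset.card (pdown P hc).parts = Multiset.card P.parts - P.parts.count 1 :=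
        card_pdown P hc
      have hm1 := hm 1
      have hcln : Multiset.card (pdown P hc).parts ≤ n := card_le _
      have hn : N ≤ n := by omega
      refine ⟨by omega, count_pdown P hc hm, ?_, ?_⟩
      · rw [alt1_pdown P hc hn]
        exact h1
      · have := alt2_pdown P hc hn
        omega
    · obtain ⟨Q, hc3, hm, h1, h2⟩ := y
      dsimp only
      have hle : Multiset.card Q.parts ≤ 3 * N + 2 := by rcases hc3 with h | h | h <;> omega
      have hcQn : Multiset.card Q.parts ≤ n := card_le _
      have hn : N ≤ n := by rcases hc3 with h | h | h <;> omega
      have hcP : Multiset.card (pup Q hle).parts = 3 * N + 2 := card_pup Q hle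
      have hQ : pdown (pup Q hle) hcP = Q := pdown_pup Q hle hcP
      have ha1 := alt1_pdown (pup Q hle) hcP hn
      have ha2 := alt2_pdown (pup Q hle) hcP hn
      rw [hQ] at ha1 ha2
      refine ⟨hcP, count_pup Q hle hm (by rcases hc3 with h | h | h <;> omega), ?_, ?_⟩
      · rw [← ha1]
        exact h1
      · omega
    · exact Subtype.ext (pup_pdown x.1 x.2.1 (by
        have hcd := card_pdown x.1 x.2.1
        have := x.2.1
        omega))
    · exact Subtype.ext (pdown_pup y.1 (by rcases y.2.1 with h | h | h <;> omega) (card_pup _ _))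
  rw [aN, Nat.card_congr E]
  have hiff : ∀ Q : n.Partition,
      ((Multiset.card Q.parts = 3 * N ∨ Multiset.card Q.parts = 3 * N + 1 ∨
        Multiset.card Q.parts = 3 * N + 2) ∧
        (∀ p, Q.parts.count p ≤ 2) ∧ altSumType 3 Q 1 = s1 ∧ altSumType 3 Q 2 = s2) ↔
      ((Multiset.card Q.parts = 3 * N ∧
        (∀ p, Q.parts.count p ≤ 2) ∧ altSumType 3 Q 1 = s1 ∧ altSumType 3 Q 2 = s2) ∨
       ((Multiset.card Q.parts = 3 * N + 1 ∧
        (∀ p, Q.parts.count p ≤ 2) ∧ altSumType 3 Q 1 = s1 ∧ altSumType 3 Q 2 = s2) ∨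
        (Multiset.card Q.parts = 3 * N + 2 ∧
        (∀ p, Q.parts.count p ≤ 2) ∧ altSumType 3 Q 1 = s1 ∧ altSumType 3 Q 2 = s2))) := by
    intro Q
    tauto
  rw [Nat.card_congr (Equiv.subtypeEquivRight hiff)]
  have d1 : Disjoint
      (fun Q : n.Partition => Multiset.card Q.parts = 3 * N ∧
        (∀ p, Q.parts.count p ≤ 2) ∧ altSumType 3 Q 1 = s1 ∧ altSumType 3 Q 2 = s2)
      (fun Q : n.Partition =>
        (Multiset.card Q.parts = 3 * N + 1 ∧
        (∀ p, Q.parts.count p ≤ 2) ∧ altSumType 3 Q 1 = s1 ∧ altSumType 3 Q 2 = s2) ∨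
        (Multiset.card Q.parts = 3 * N + 2 ∧
        (∀ p, Q.parts.count p ≤ 2) ∧ altSumType 3 Q 1 = s1 ∧ altSumType 3 Q 2 = s2)) := by
    rw [Pi.disjoint_iff]
    intro Q
    rw [Prop.disjoint_iff]
    rintro ⟨⟨h1, -⟩, (⟨h2, -⟩ | ⟨h2, -⟩)⟩ <;> omega
  have d2 : Disjoint
      (fun Q : n.Partition => Multiset.card Q.parts = 3 * N + 1 ∧
        (∀ p, Q.parts.count p ≤ 2) ∧ altSumType 3 Q 1 = s1 ∧ altSumType 3 Q 2 = s2)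
      (fun Q : n.Partition => Multiset.card Q.parts = 3 * N + 2 ∧
        (∀ p, Q.parts.count p ≤ 2) ∧ altSumType 3 Q 1 = s1 ∧ altSumType 3 Q 2 = s2) := by
    rw [Pi.disjoint_iff]
    intro Q
    rw [Prop.disjoint_iff]
    rintro ⟨⟨h1, -⟩, ⟨h2, -⟩⟩
    omega
  rw [Nat.card_congr (subtypeOrEquiv _ _ d1), Nat.card_sum,
    Nat.card_congr (subtypeOrEquiv _ _ d2), Nat.card_sum, aN, aN, aN]
  ring

end StmtHelper

/-! ### power series lemmas -/

theorem coeff_Aser {k : ℕ} (hk : k ≠ 0) (e : Fin 3 →₀ ℕ) :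
    MvPowerSeries.coeff e (Aser k) = if 1 ≤ e 2 then (aN k (e 0) (e 1) (e 2) : ℤ) else 0 := by
  simp only [Aser, hk, ↓reduceIte]
  rfl

theorem hkey_ser (N : ℕ) (hN : 1 ≤ N) :
    Aser (3 * N + 2) =
      (Aser (3 * N) + Aser (3 * N + 1) + Aser (3 * N + 2)) * (Yv * Qv ^ (3 * N + 2)) := by
  classical
  have hmono : Yv * Qv ^ (3 * N + 2) = MvPowerSeries.monomial
      (Finsupp.single 1 1 + Finsupp.single 2 (3 * N + 2)) 1 := by
    rw [Yv, Qv, MvPowerSeries.X_pow_eq, MvPowerSeries.X_def,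
      MvPowerSeries.monomial_mul_monomial, one_mul]
  apply MvPowerSeries.ext
  intro e
  set M : Fin 3 →₀ ℕ := Finsupp.single 1 1 + Finsupp.single 2 (3 * N + 2) with hMdef
  rw [hmono, MvPowerSeries.coeff_mul_monomial, mul_one,
    coeff_Aser (show (3 : ℕ) * N + 2 ≠ 0 by omega)]
  have he0 : (e - M) 0 = e 0 := by
    rw [Finsupp.tsub_apply]
    simp [M, Finsupp.single_apply]
  have he1 : (e - M) 1 = e 1 - 1 := by
    rw [Finsupp.tsub_apply]
    simp [M, Finsupp.single_apply]
  have he2 : (e - M) 2 = e 2 - (3 * N + 2) := by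
    rw [Finsupp.tsub_apply]
    simp [M, Finsupp.single_apply]
  have hMle : M ≤ e ↔ 1 ≤ e 1 ∧ 3 * N + 2 ≤ e 2 := by
    rw [Finsupp.le_def]
    constructor
    · intro h
      constructor
      · have := h 1
        simpa [M, Finsupp.single_apply] using this
      · have := h 2
        simpa [M, Finsupp.single_apply] using this
    · rintro ⟨h1, h2⟩ s
      fin_cases s <;> simp [M, Finsupp.single_apply] <;> omega
  by_cases hle : M ≤ e
  · rw [if_pos hle]
    obtain ⟨h1, h2⟩ := hMle.mp hle
    rw [if_pos (show (1 : ℕ) ≤ e 2 by omega), map_add, map_add,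
      coeff_Aser (show (3 : ℕ) * N ≠ 0 by omega), coeff_Aser (show (3 : ℕ) * N + 1 ≠ 0 by omega),
      coeff_Aser (show (3 : ℕ) * N + 2 ≠ 0 by omega), he0, he1, he2]
    by_cases h2' : 3 * N + 2 < e 2
    · rw [if_pos (show (1 : ℕ) ≤ e 2 - (3 * N + 2) by omega),
        if_pos (show (1 : ℕ) ≤ e 2 - (3 * N + 2) by omega),
        if_pos (show (1 : ℕ) ≤ e 2 - (3 * N + 2) by omega)]
      have hk := StmtHelper.key N (e 0) (e 1 - 1) (e 2 - (3 * N + 2))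
      have heq1 : e 1 - 1 + 1 = e 1 := by omega
      have heq2 : e 2 - (3 * N + 2) + (3 * N + 2) = e 2 := by omega
      rw [heq1, heq2] at hk
      rw [hk]
      push_cast
      ring
    · rw [if_neg (show ¬(1 : ℕ) ≤ e 2 - (3 * N + 2) by omega),
        if_neg (show ¬(1 : ℕ) ≤ e 2 - (3 * N + 2) by omega),
        if_neg (show ¬(1 : ℕ) ≤ e 2 - (3 * N + 2) by omega)]
      have he2' : e 2 = 3 * N + 2 := by omega
      have hz : aN (3 * N + 2) (e 0) (e 1) (e 2) = 0 := by
        have hk := StmtHelper.key N (e 0) (e 1 - 1) 0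
        rw [StmtHelper.aN_eq_zero_of_lt (show (0 : ℕ) < 3 * N by omega),
          StmtHelper.aN_eq_zero_of_lt (show (0 : ℕ) < 3 * N + 1 by omega),
          StmtHelper.aN_eq_zero_of_lt (show (0 : ℕ) < 3 * N + 2 by omega)] at hk
        have heq1 : e 1 - 1 + 1 = e 1 := by omega
        rw [heq1, zero_add] at hk
        rw [he2']
        simpa using hk
      rw [hz]
      simp
  · rw [if_neg hle]
    by_cases h2 : 1 ≤ e 2
    · rw [if_pos h2]
      rcases Nat.lt_or_ge (e 2) (3 * N + 2) with hlt | hge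
      · rw [StmtHelper.aN_eq_zero_of_lt hlt]
        norm_num
      · have h1 : e 1 = 0 := by
          by_contra hcon
          exact hle (hMle.mpr ⟨by omega, hge⟩)
        rw [h1, StmtHelper.aN_eq_zero_of_s2_zero]
        norm_num
    · rw [if_neg h2]


theorem stmt15 (N : ℕ) (hN : 1 ≤ N) :
    Pser (3 * N + 2) * (1 - Yv * Qv ^ (3 * N + 2)) =
      Pser (3 * N + 1) - Pser (3 * N - 1) * (Yv * Qv ^ (3 * N + 2)) := by
  have hkey := hkey_ser N hN
  have h0 : Pser (3 * N + 2) = Pser (3 * N + 1) + Aser (3 * N + 2) := Finset.sum_range_succ _ _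
  have h1 : Pser (3 * N + 1) = Pser (3 * N) + Aser (3 * N + 1) := Finset.sum_range_succ _ _
  have h2 : Pser (3 * N) = Pser (3 * N - 1) + Aser (3 * N) := by
    have h3 : 3 * N - 1 + 1 = 3 * N := by omega
    rw [Pser, Pser, h3, Finset.sum_range_succ]
  rw [h0, h1, h2]
  linear_combination hkey
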